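/- Let G be a finite nonempty r-regular simple graph with r ≥ 1 that is of class two. Then the girth of G equals 3. -/

import Mathlib

open Finset

/-- `C` is a vertex cover of `G`: every edge has an endpoint in `C`. -/
def IsCover {V : Type*} (G : SimpleGraph V) (C : Finset V) : Prop :=
  ∀ ⦃u v : V⦄, G.Adj u v → u ∈ C ∨ v ∈ C

/-- `A` is an independent set of `G`: no two of its vertices are adjacent. -/
def IsIndep {V : Type*} (G : SimpleGraph V) (A : Finset V) : Prop :=
  ∀ ⦃u : V⦄, u ∈ A → ∀ ⦃v : V⦄, v ∈ A → ¬ G.Adj u v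

/-- The vertex cover number β(G): the minimum size of a vertex cover of `G`. -/
noncomputable def coverNumber {V : Type*} [Fintype V] (G : SimpleGraph V) : ℕ :=
  sInf {n : ℕ | ∃ C : Finset V, IsCover G C ∧ C.card = n}

/-- `G` admits a feasible schedule for a boat of capacity `b`, in the sense of the
structure theorem of Csorba, Hurkens and Woeginger. -/
def Feasible {V : Type*} [Fintype V] [DecidableEq V] (G : SimpleGraph V) (b : ℕ) : Prop :=
  ∃ X₁ X₂ X₃ Y₁ Y₂ : Finset V,
    Disjoint X₁ X₂ ∧ Disjoint X₁ X₃ ∧ Disjoint X₂ X₃ ∧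
    IsIndep G (X₁ ∪ X₂ ∪ X₃) ∧
    Y₁.Nonempty ∧ Y₂.Nonempty ∧
    Y₁ ⊆ Finset.univ \ (X₁ ∪ X₂ ∪ X₃) ∧ Y₂ ⊆ Finset.univ \ (X₁ ∪ X₂ ∪ X₃) ∧
    (Finset.univ \ (X₁ ∪ X₂ ∪ X₃)).card ≤ b ∧
    IsIndep G (X₁ ∪ Y₁) ∧ IsIndep G (X₂ ∪ Y₂) ∧
    X₃.card ≤ Y₁.card + Y₂.card

/-- `G` is of class one if it has a feasible schedule for boat capacity β(G). -/
def ClassOne {V : Type*} [Fintype V] [DecidableEq V] (G : SimpleGraph V) : Prop :=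
  Feasible G (coverNumber G)

/-- `G` is of class two if it is not of class one. -/
def ClassTwo {V : Type*} [Fintype V] [DecidableEq V] (G : SimpleGraph V) : Prop :=
  ¬ ClassOne G


lemma girth_eq_three_of_triangle {V : Type*} (G : SimpleGraph V) {a b c : V}
    (hab : G.Adj a b) (hbc : G.Adj b c) (hca : G.Adj c a) : G.girth = 3 := by
  set w : G.Walk a a := .cons hab (.cons hbc (.cons hca .nil)) with hw
  have hcyc : w.IsCycle := by
    rw [hw, SimpleGraph.Walk.cons_isCycle_iff]
    constructor
    · rw [SimpleGraph.Walk.cons_isPath_iff]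
      refine ⟨?_, ?_⟩
      · rw [SimpleGraph.Walk.cons_isPath_iff]
        exact ⟨SimpleGraph.Walk.IsPath.nil, by simp [hca.ne]⟩
      · simp [hab.ne', hbc.ne, hbc.ne']
    · simp [Sym2.eq, Sym2.rel_iff', hab.ne, hab.ne', hbc.ne, hbc.ne', hca.ne, hca.ne']
  have hlen : w.length = 3 := by simp [hw]
  have hle : G.egirth ≤ 3 := by
    rw [SimpleGraph.egirth]
    refine le_trans (iInf_le_of_le a (iInf_le_of_le w (iInf_le _ hcyc))) ?_
    simp [hlen]
  have heq : G.egirth = 3 := le_antisymm hle SimpleGraph.three_le_egirth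
  simp [SimpleGraph.girth, heq]

lemma exists_min_cover {V : Type*} [Fintype V] (G : SimpleGraph V) :
    ∃ C : Finset V, IsCover G C ∧ C.card = coverNumber G := by
  have hne : {n : ℕ | ∃ C : Finset V, IsCover G C ∧ C.card = n}.Nonempty :=
    ⟨(univ : Finset V).card, univ, fun u v _ => Or.inl (mem_univ u), rfl⟩
  obtain ⟨C, hC, hcard⟩ := Nat.sInf_mem hne
  exact ⟨C, hC, hcard⟩


-- counting lemma: if every vertex of X has all neighbors in C, in an r-regular graph, |X| ≤ |C|
lemma card_le_card_of_nbhd {V : Type*} [Fintype V] [DecidableEq V] (G : SimpleGraph V)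
    [DecidableRel G.Adj] (r : ℕ) (hr : 1 ≤ r) (hreg : G.IsRegularOfDegree r)
    (X C : Finset V) (hXC : ∀ x ∈ X, G.neighborFinset x ⊆ C) : X.card ≤ C.card := by
  have key : r * X.card ≤ r * C.card := by
    calc r * X.card = ∑ x ∈ X, (G.neighborFinset x).card := by
          simp [hreg _, mul_comm]
      _ = ∑ x ∈ X, ∑ y ∈ C, (if G.Adj x y then 1 else 0) := by
          refine Finset.sum_congr rfl fun x hx => ?_
          rw [← Finset.card_filter]
          congr 1
          ext y
          simp only [SimpleGraph.mem_neighborFinset, Finset.mem_filter]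
          exact ⟨fun h => ⟨hXC x hx (by simpa using h), h⟩, fun h => h.2⟩
      _ = ∑ y ∈ C, ∑ x ∈ X, (if G.Adj x y then 1 else 0) := Finset.sum_comm
      _ ≤ ∑ y ∈ C, r := by
          refine Finset.sum_le_sum fun y _ => ?_
          rw [← Finset.card_filter]
          calc (X.filter (fun x => G.Adj x y)).card
              ≤ (G.neighborFinset y).card :=
                Finset.card_le_card (fun x hx => by
                  simp only [SimpleGraph.mem_neighborFinset]
                  exact ((Finset.mem_filter.1 hx).2).symm)
            _ = r := hreg y
      _ = r * C.card := by simp [mul_comm]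
  exact Nat.le_of_mul_le_mul_left key hr

lemma feasible_of_triangle_free {V : Type*} [Fintype V] [DecidableEq V] [Nonempty V]
    (G : SimpleGraph V) [DecidableRel G.Adj] (r : ℕ) (hr : 1 ≤ r)
    (hreg : G.IsRegularOfDegree r)
    (htf : ∀ a b c : V, G.Adj a b → G.Adj b c → ¬ G.Adj c a) :
    Feasible G (coverNumber G) := by
  obtain ⟨C, hCcov, hCcard⟩ := exists_min_cover G
  set X : Finset V := univ \ C with hXdef
  have hXC : ∀ x ∈ X, G.neighborFinset x ⊆ C := by
    intro x hx u hu
    rw [SimpleGraph.mem_neighborFinset] at hu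
    rcases hCcov hu with h | h
    · exact absurd h (by simpa [hXdef] using hx)
    · exact h
  have hXind : IsIndep G X := by
    intro u hu v hv huv
    simp only [hXdef, Finset.mem_sdiff] at hu hv
    rcases hCcov huv with h | h
    · exact hu.2 h
    · exact hv.2 h
  have hcompl : univ \ X = C := by
    ext x; simp [hXdef]
  by_cases hE : ∃ y₁ y₂, y₁ ∈ C ∧ y₂ ∈ C ∧ G.Adj y₁ y₂
  · obtain ⟨y₁, y₂, hy₁, hy₂, hadj⟩ := hE
    refine ⟨X.filter (fun x => ¬ G.Adj y₁ x), X.filter (fun x => G.Adj y₁ x), ∅,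
      {y₁}, {y₂}, ?_, ?_, ?_, ?_, ?_, ?_, ?_, ?_, ?_, ?_, ?_, ?_⟩
    ·
      rw [Finset.disjoint_left]; intro a ha ha'
      exact (Finset.mem_filter.1 ha).2 (Finset.mem_filter.1 ha').2
    · exact Finset.disjoint_empty_right _
    · exact Finset.disjoint_empty_right _
    all_goals
      (try rw [show X.filter (fun x => ¬ G.Adj y₁ x) ∪ X.filter (fun x => G.Adj y₁ x) ∪ ∅ = X by
        rw [Finset.union_empty]
        ext a; simp only [Finset.mem_union, Finset.mem_filter]; tauto])
    · exact hXind
    · exact Finset.singleton_nonempty _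
    · exact Finset.singleton_nonempty _
    · rw [hcompl]; simpa using hy₁
    · rw [hcompl]; simpa using hy₂
    · rw [hcompl, hCcard]
    ·
      intro u hu v hv huv
      rcases Finset.mem_union.1 hu with hu' | hu' <;>
        rcases Finset.mem_union.1 hv with hv' | hv'
      · exact hXind (Finset.mem_filter.1 hu').1 (Finset.mem_filter.1 hv').1 huv
      · have hveq : v = y₁ := Finset.mem_singleton.1 hv'
        exact (Finset.mem_filter.1 hu').2 (hveq ▸ huv.symm)
      · have hueq : u = y₁ := Finset.mem_singleton.1 hu'
        exact (Finset.mem_filter.1 hv').2 (hueq ▸ huv)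
      · have hueq : u = y₁ := Finset.mem_singleton.1 hu'
        have hveq : v = y₁ := Finset.mem_singleton.1 hv'
        subst hueq; subst hveq
        exact G.loopless.irrefl _ huv
    ·
      intro u hu v hv huv
      rcases Finset.mem_union.1 hu with hu' | hu' <;>
        rcases Finset.mem_union.1 hv with hv' | hv'
      · exact hXind (Finset.mem_filter.1 hu').1 (Finset.mem_filter.1 hv').1 huv
      · have hveq : v = y₂ := Finset.mem_singleton.1 hv'
        exact htf y₁ u y₂ (Finset.mem_filter.1 hu').2 (hveq ▸ huv) hadj.symm
      · have hueq : u = y₂ := Finset.mem_singleton.1 hu'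
        exact htf y₁ v y₂ (Finset.mem_filter.1 hv').2 (hueq ▸ huv.symm) hadj.symm
      · have hueq : u = y₂ := Finset.mem_singleton.1 hu'
        have hveq : v = y₂ := Finset.mem_singleton.1 hv'
        subst hueq; subst hveq
        exact G.loopless.irrefl _ huv
    · simp
  · push_neg at hE
    have hCind : IsIndep G C := fun u hu v hv huv => hE u v hu hv huv
    have hCne : C.Nonempty := by
      obtain ⟨v⟩ := ‹Nonempty V›
      have hd : (G.neighborFinset v).card = r := hreg v
      have : 0 < (G.neighborFinset v).card := by omega
      obtain ⟨u, hu⟩ := Finset.card_pos.1 this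
      rw [SimpleGraph.mem_neighborFinset] at hu
      rcases hCcov hu with h | h
      exacts [⟨v, h⟩, ⟨u, h⟩]
    have hcount : X.card ≤ C.card := card_le_card_of_nbhd G r hr hreg X C hXC
    refine ⟨∅, ∅, X, C, C, ?_, ?_, ?_, ?_, hCne, hCne, ?_, ?_, ?_, ?_, ?_, ?_⟩
    · simp
    · simp
    · simp
    · simpa using hXind
    · rw [show (∅ ∪ ∅ ∪ X : Finset V) = X by simp, hcompl]
    · rw [show (∅ ∪ ∅ ∪ X : Finset V) = X by simp, hcompl]
    · rw [show (∅ ∪ ∅ ∪ X : Finset V) = X by simp, hcompl, hCcard]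
    · simpa using hCind
    · simpa using hCind
    · omega

/-- A finite nonempty regular graph of class two has girth 3. -/
theorem girth_eq_three_of_regular_classTwo {V : Type*} [Fintype V] [DecidableEq V] [Nonempty V]
    (G : SimpleGraph V) [DecidableRel G.Adj] (r : ℕ) (hr : 1 ≤ r)
    (hreg : G.IsRegularOfDegree r) (h2 : ClassTwo G) :
    G.girth = 3 := by
  obtain ⟨a, b, c, hab, hbc, hca⟩ : ∃ a b c : V, G.Adj a b ∧ G.Adj b c ∧ G.Adj c a := by
    by_contra htf
    push_neg at htf
    exact h2 (feasible_of_triangle_free G r hr hreg fun a b c h1 h2' => htf a b c h1 h2')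
  exact girth_eq_three_of_triangle G hab hbc hca
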